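/- If the sphere S^h can be covered by n open sets, none containing a pair of antipodal points, such that every point of S^h lies in at most l of the sets, then S^{h+1} can be covered by n+1 open sets, none containing a pair of antipodal points, such that every point of S^{h+1} lies in at most l+1 of the sets. -/

import Mathlib

open Metric Set

noncomputable section

def pmap (h : ℕ) (x : EuclideanSpace ℝ (Fin (h + 2))) : EuclideanSpace ℝ (Fin (h + 1)) :=
  WithLp.toLp 2 (fun i : Fin (h + 1) => x i.castSucc)

lemma pmap_continuous (h : ℕ) : Continuous (pmap h) := by
  unfold pmap
  fun_prop

lemma pmap_neg (h : ℕ) (x : EuclideanSpace ℝ (Fin (h+2))) : pmap h (-x) = -pmap h x := by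
  ext i; simp [pmap]

lemma neg_apply' (h : ℕ) (x : EuclideanSpace ℝ (Fin (h+2))) (i : Fin (h+2)) : (-x) i = -(x i) := by simp

lemma norm_pmap_sq (h : ℕ) (x : EuclideanSpace ℝ (Fin (h+2))) (hx : ‖x‖ = 1) :
    ‖pmap h x‖ ^ 2 = 1 - x (Fin.last (h+1)) ^ 2 := by
  have h1 : ‖x‖ ^ 2 = ∑ i, x i ^ 2 := by
    rw [EuclideanSpace.norm_eq, Real.sq_sqrt (by positivity)]
    simp [sq_abs]
  have h2 : ‖pmap h x‖ ^ 2 = ∑ i : Fin (h+1), x i.castSucc ^ 2 := by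
    rw [EuclideanSpace.norm_eq, Real.sq_sqrt (by positivity)]
    simp [pmap, sq_abs]
  rw [h2]
  rw [hx] at h1
  rw [Fin.sum_univ_castSucc] at h1
  linarith

def nmap (h : ℕ) (x : EuclideanSpace ℝ (Fin (h + 2))) : EuclideanSpace ℝ (Fin (h + 1)) :=
  ‖pmap h x‖⁻¹ • pmap h x

lemma nmap_mem_sphere (h : ℕ) (x : EuclideanSpace ℝ (Fin (h+2))) (hp : pmap h x ≠ 0) :
    nmap h x ∈ sphere (0 : EuclideanSpace ℝ (Fin (h+1))) 1 := by
  have : ‖pmap h x‖ ≠ 0 := norm_ne_zero_iff.mpr hp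
  simp [nmap, mem_sphere_zero_iff_norm, norm_smul, abs_of_nonneg (norm_nonneg _),
    inv_mul_cancel₀ this]

lemma nmap_neg (h : ℕ) (x : EuclideanSpace ℝ (Fin (h+2))) : nmap h (-x) = - nmap h x := by
  simp [nmap, pmap_neg]

lemma nmap_continuousOn (h : ℕ) :
    ContinuousOn (nmap h) {x | pmap h x ≠ 0} := by
  refine ContinuousOn.smul (f := fun x => ‖pmap h x‖⁻¹) (g := pmap h) ?_ ?_
  · apply ContinuousOn.inv₀
    · exact ((pmap_continuous h).norm).continuousOn
    · intro x hx
      exact norm_ne_zero_iff.mpr hx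
  · exact (pmap_continuous h).continuousOn

def liftSet (h : ℕ) (V : Set (EuclideanSpace ℝ (Fin (h+1)))) : Set (EuclideanSpace ℝ (Fin (h+2))) :=
  {x | x (Fin.last (h+1)) < 1/2 ∧ pmap h x ≠ 0 ∧ nmap h x ∈ V}

lemma isOpen_liftSet (h : ℕ) (V : Set (EuclideanSpace ℝ (Fin (h+1)))) (hV : IsOpen V) :
    IsOpen (liftSet h V) := by
  have h1 : IsOpen {x : EuclideanSpace ℝ (Fin (h+2)) | x (Fin.last (h+1)) < 1/2} := by
    have hc : Continuous fun x : EuclideanSpace ℝ (Fin (h+2)) => x (Fin.last (h+1)) :=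
      (EuclideanSpace.proj (𝕜 := ℝ) (Fin.last (h+1))).continuous
    exact isOpen_lt hc continuous_const
  have hop : IsOpen {x : EuclideanSpace ℝ (Fin (h+2)) | pmap h x ≠ 0} := by
    have : {x : EuclideanSpace ℝ (Fin (h+2)) | pmap h x ≠ 0} = (pmap h ⁻¹' {0})ᶜ := by
      ext x; simp
    rw [this]
    exact (isClosed_singleton.preimage (pmap_continuous h)).isOpen_compl
  have h2 : IsOpen ({x : EuclideanSpace ℝ (Fin (h+2)) | pmap h x ≠ 0} ∩ nmap h ⁻¹' V) :=
    (nmap_continuousOn h).isOpen_inter_preimage hop hV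
  have : liftSet h V = {x : EuclideanSpace ℝ (Fin (h+2)) | x (Fin.last (h+1)) < 1/2} ∩
      ({x | pmap h x ≠ 0} ∩ nmap h ⁻¹' V) := by
    ext x; simp [liftSet, and_assoc]
  rw [this]
  exact h1.inter h2

theorem cover_step (h l n : ℕ)
    (hex : ∃ U : Fin n → Set (EuclideanSpace ℝ (Fin (h + 1))),
      (∀ i, ∃ V, IsOpen V ∧ U i = V ∩ Metric.sphere 0 1) ∧
      (Metric.sphere (0 : EuclideanSpace ℝ (Fin (h + 1))) 1 ⊆ ⋃ i, U i) ∧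
      (∀ i, ∀ x, x ∈ U i → -x ∉ U i) ∧
      (∀ x ∈ Metric.sphere (0 : EuclideanSpace ℝ (Fin (h + 1))) 1,
        {i : Fin n | x ∈ U i}.ncard ≤ l)) :
    ∃ W : Fin (n + 1) → Set (EuclideanSpace ℝ (Fin (h + 2))),
      (∀ i, ∃ V, IsOpen V ∧ W i = V ∩ Metric.sphere 0 1) ∧
      (Metric.sphere (0 : EuclideanSpace ℝ (Fin (h + 2))) 1 ⊆ ⋃ i, W i) ∧
      (∀ i, ∀ x, x ∈ W i → -x ∉ W i) ∧
      (∀ x ∈ Metric.sphere (0 : EuclideanSpace ℝ (Fin (h + 2))) 1,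
        {i : Fin (n + 1) | x ∈ W i}.ncard ≤ l + 1) := by
  obtain ⟨U, hUopen, hUcov, hUanti, hUmult⟩ := hex
  choose V hVopen hVU using hUopen
  rcases n with _ | m
  · exfalso
    have hmem : (EuclideanSpace.single (0 : Fin (h+1)) (1:ℝ)) ∈
        Metric.sphere (0 : EuclideanSpace ℝ (Fin (h+1))) 1 := by
      simp [mem_sphere_zero_iff_norm, EuclideanSpace.norm_single]
    have := hUcov hmem
    simp at this
  set A : Fin (m+1+1) → Set (EuclideanSpace ℝ (Fin (h+2))) :=
    Fin.snoc (fun j => liftSet h (V j) ∪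
        (if j = 0 then {x : EuclideanSpace ℝ (Fin (h+2)) | x (Fin.last (h+1)) < -(3/4)} else ∅))
      {x : EuclideanSpace ℝ (Fin (h+2)) | 0 < x (Fin.last (h+1))} with hA
  have hmemc : ∀ (j : Fin (m+1)) (x : EuclideanSpace ℝ (Fin (h+2))),
      x ∈ A j.castSucc ↔ (x ∈ liftSet h (V j) ∨ (j = 0 ∧ x (Fin.last (h+1)) < -(3/4))) := by
    intro j x
    rw [hA, Fin.snoc_castSucc]
    by_cases hj : j = 0
    · subst hj; simp
    · simp [hj]
  have hmeml : ∀ x : EuclideanSpace ℝ (Fin (h+2)),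
      x ∈ A (Fin.last (m+1)) ↔ 0 < x (Fin.last (h+1)) := by
    intro x
    rw [hA]
    simp [Fin.snoc_last]
  have hliftU : ∀ (j : Fin (m+1)) (x : EuclideanSpace ℝ (Fin (h+2))),
      x ∈ liftSet h (V j) → nmap h x ∈ U j := by
    intro j x hx
    rw [hVU]
    exact ⟨hx.2.2, nmap_mem_sphere h x hx.2.1⟩
  refine ⟨fun i => A i ∩ Metric.sphere 0 1, ?_, ?_, ?_, ?_⟩
  · -- openness
    intro i
    refine ⟨A i, ?_, rfl⟩
    induction i using Fin.lastCases with
    | last =>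
      rw [hA]
      simp only [Fin.snoc_last]
      exact isOpen_lt continuous_const (EuclideanSpace.proj (𝕜 := ℝ) (Fin.last (h+1))).continuous
    | cast j =>
      rw [hA]
      simp only [Fin.snoc_castSucc]
      apply (isOpen_liftSet h (V j) (hVopen j)).union
      split
      · exact isOpen_lt (EuclideanSpace.proj (𝕜 := ℝ) (Fin.last (h+1))).continuous continuous_const
      · exact isOpen_empty
  · -- coverage
    intro x hx
    have hx1 : ‖x‖ = 1 := mem_sphere_zero_iff_norm.mp hx
    have key := norm_pmap_sq h x hx1
    rw [Set.mem_iUnion]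
    by_cases hpos : 0 < x (Fin.last (h+1))
    · exact ⟨Fin.last (m+1), (hmeml x).mpr hpos, hx⟩
    · push_neg at hpos
      by_cases hp0 : pmap h x = 0
      · refine ⟨(0 : Fin (m+1)).castSucc, (hmemc 0 x).mpr (Or.inr ⟨rfl, ?_⟩), hx⟩
        rw [hp0] at key
        simp at key
        have hsq : x (Fin.last (h+1)) ^ 2 = 1 := by linarith
        have : (x (Fin.last (h+1)) - 1) * (x (Fin.last (h+1)) + 1) = 0 := by nlinarith
        rcases mul_eq_zero.mp this with h1 | h2
        · nlinarith
        · nlinarith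
      · obtain ⟨j, hj⟩ := Set.mem_iUnion.mp (hUcov (nmap_mem_sphere h x hp0))
        refine ⟨j.castSucc, (hmemc j x).mpr (Or.inl ?_), hx⟩
        refine ⟨by linarith, hp0, ?_⟩
        rw [hVU] at hj
        exact hj.1
  · -- antipode-free
    intro i x hxW hnW
    induction i using Fin.lastCases with
    | last =>
      have h1 := (hmeml x).mp hxW.1
      have h2 := (hmeml (-x)).mp hnW.1
      rw [neg_apply'] at h2
      linarith
    | cast j =>
      rcases (hmemc j x).mp hxW.1 with hx1 | hx1 <;>
        rcases (hmemc j (-x)).mp hnW.1 with hx2 | hx2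
      · exact hUanti j (nmap h x) (hliftU j x hx1)
          (by rw [← nmap_neg]; exact hliftU j (-x) hx2)
      · have := hx1.1
        have h2 := hx2.2
        rw [neg_apply'] at h2
        linarith
      · have := hx2.1
        have h2 := hx1.2
        rw [neg_apply'] at this
        linarith
      · have h1 := hx1.2
        have h2 := hx2.2
        rw [neg_apply'] at h2
        linarith
  · -- multiplicity
    intro x hx
    have hx1 : ‖x‖ = 1 := mem_sphere_zero_iff_norm.mp hx
    have key := norm_pmap_sq h x hx1
    by_cases hp0 : pmap h x = 0
    · -- only one set can contain x
      have hnl : ∀ j : Fin (m+1), x ∉ liftSet h (V j) := fun j hj => hj.2.1 hp0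
      by_cases hpos : 0 < x (Fin.last (h+1))
      · have hsub : {i : Fin (m+1+1) | x ∈ A i ∩ Metric.sphere 0 1} ⊆ {Fin.last (m+1)} := by
          intro i hi
          induction i using Fin.lastCases with
          | last => rfl
          | cast j =>
            rcases (hmemc j x).mp hi.1 with h1 | h1
            · exact absurd h1 (hnl j)
            · exfalso; linarith [h1.2]
        calc {i : Fin (m+1+1) | x ∈ A i ∩ Metric.sphere 0 1}.ncard
            ≤ ({Fin.last (m+1)} : Set (Fin (m+1+1))).ncard :=
              Set.ncard_le_ncard hsub (Set.toFinite _)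
          _ = 1 := Set.ncard_singleton _
          _ ≤ l + 1 := Nat.le_add_left 1 l
      · have hsub : {i : Fin (m+1+1) | x ∈ A i ∩ Metric.sphere 0 1} ⊆
            {(0 : Fin (m+1)).castSucc} := by
          intro i hi
          induction i using Fin.lastCases with
          | last => exact absurd ((hmeml x).mp hi.1) hpos
          | cast j =>
            rcases (hmemc j x).mp hi.1 with h1 | h1
            · exact absurd h1 (hnl j)
            · simp [h1.1]
        calc {i : Fin (m+1+1) | x ∈ A i ∩ Metric.sphere 0 1}.ncard
            ≤ ({(0 : Fin (m+1)).castSucc} : Set (Fin (m+1+1))).ncard :=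
              Set.ncard_le_ncard hsub (Set.toFinite _)
          _ = 1 := Set.ncard_singleton _
          _ ≤ l + 1 := Nat.le_add_left 1 l
    · have hns := nmap_mem_sphere h x hp0
      have hT : {j : Fin (m+1) | nmap h x ∈ U j}.ncard ≤ l := hUmult _ hns
      have hcount : ∀ a : Fin (m+1+1),
          {i : Fin (m+1+1) | x ∈ A i ∩ Metric.sphere 0 1} ⊆
            insert a (Fin.castSucc '' {j : Fin (m+1) | nmap h x ∈ U j}) →
          {i : Fin (m+1+1) | x ∈ A i ∩ Metric.sphere 0 1}.ncard ≤ l + 1 := by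
        intro a hsub
        calc {i : Fin (m+1+1) | x ∈ A i ∩ Metric.sphere 0 1}.ncard
            ≤ (insert a (Fin.castSucc '' {j : Fin (m+1) | nmap h x ∈ U j})).ncard :=
              Set.ncard_le_ncard hsub (Set.toFinite _)
          _ ≤ (Fin.castSucc '' {j : Fin (m+1) | nmap h x ∈ U j}).ncard + 1 :=
              Set.ncard_insert_le _ _
          _ = {j : Fin (m+1) | nmap h x ∈ U j}.ncard + 1 := by
              rw [Set.ncard_image_of_injective _ (Fin.castSucc_injective _)]
          _ ≤ l + 1 := by omega
      by_cases hpos : 0 < x (Fin.last (h+1))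
      · apply hcount (Fin.last (m+1))
        intro i hi
        induction i using Fin.lastCases with
        | last => exact Set.mem_insert _ _
        | cast j =>
          rcases (hmemc j x).mp hi.1 with h1 | h1
          · exact Set.mem_insert_of_mem _ ⟨j, hliftU j x h1, rfl⟩
          · exfalso; linarith [h1.2]
      · apply hcount ((0 : Fin (m+1)).castSucc)
        intro i hi
        induction i using Fin.lastCases with
        | last => exact absurd ((hmeml x).mp hi.1) hpos
        | cast j =>
          rcases (hmemc j x).mp hi.1 with h1 | h1
          · exact Set.mem_insert_of_mem _ ⟨j, hliftU j x h1, rfl⟩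
          · rw [h1.1]; exact Set.mem_insert _ _
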